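/- For every positive integer n and integer T with 2T ≥ 5n, we have A(n,T) ≥ 4^n / 2; that is, at least half of all quaternary words of length n have synthesis time at most T. -/

import Mathlib

/-- A list of integers is quaternary if all entries lie in {1,2,3,4}. -/
def IsQ (x : List ℤ) : Prop := ∀ a ∈ x, 1 ≤ a ∧ a ≤ 4

/-- The alternating quaternary supersequence 1,2,3,4,1,2,3,4,... of length `T`. -/
def altSeq (T : ℕ) : List ℤ := (List.range T).map (fun i => ((i % 4 : ℕ) : ℤ) + 1)

/-- The synthesis time of `x`: the least `T` such that `x` is a subsequence of `altSeq T`. -/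
noncomputable def synTime (x : List ℤ) : ℕ := sInf {T : ℕ | x.Sublist (altSeq T)}

/-- The shifted modulo: the unique element of {1,2,3,4} congruent to `a` mod 4. -/
def mods4 (a : ℤ) : ℤ := (a - 1) % 4 + 1

/-- The differential word of `x`. -/
def diffWord (x : List ℤ) : List ℤ := List.zipWith (fun p c => mods4 (c - p)) (0 :: x) x

/-- The set of quaternary words of length `n` with synthesis time at most `T`. -/
def W (n : ℕ) (T : ℤ) : Set (List ℤ) :=
  {x | x.length = n ∧ IsQ x ∧ (synTime x : ℤ) ≤ T}

/-- `A n T` is the number of quaternary words of length `n` with synthesis time at most `T`. -/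
noncomputable def A (n : ℕ) (T : ℤ) : ℕ := (W n T).ncard

/-- The single-indel ball of `x`. -/
def ball (x : List ℤ) : Set (List ℤ) :=
  {y | y = x ∨ (y.length + 1 = x.length ∧ y.Sublist x) ∨
       (x.length + 1 = y.length ∧ IsQ y ∧ x.Sublist y)}

/-- The auxiliary binary sequence of `x` (as 0/1 naturals). -/
def auxSeq (x : List ℤ) : List ℕ :=
  List.zipWith (fun a b => if a ≤ b then 1 else 0) x x.tail

/-- VT syndrome of a binary word: `∑ i·w_i` with positions starting from 1. -/
def vtSyn (w : List ℕ) : ℕ := ∑ i ∈ Finset.range w.length, (i + 1) * w.getD i 0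

/-- The quaternary VT code. -/
def VTn (n : ℕ) (a : ZMod n) (b : ZMod 4) : Set (List ℤ) :=
  {x | x.length = n ∧ IsQ x ∧ ((vtSyn (auxSeq x) : ℕ) : ZMod n) = a ∧
       ((x.sum : ℤ) : ZMod 4) = b}

/-- The quaternary VT code with synthesis time constraint. -/
def VTnT (n : ℕ) (a : ZMod n) (b : ZMod 4) (T : ℤ) : Set (List ℤ) :=
  {x ∈ VTn n a b | (synTime x : ℤ) ≤ T}

/-! ### Auxiliary machinery -/

/-- sum of step costs starting from previous symbol `p`. -/
def dsum (p : ℤ) : List ℤ → ℤ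
  | [] => 0
  | c :: r => mods4 (c - p) + dsum c r

/-- alternating sequence starting after virtual symbol `p`. -/
def myAlt (p : ℤ) (L : ℕ) : List ℤ := (List.range L).map (fun i : ℕ => mods4 (p + (i : ℤ) + 1))

lemma mods4_bounds (a : ℤ) : 1 ≤ mods4 a ∧ mods4 a ≤ 4 := by unfold mods4; omega

lemma mods4_emod (a : ℤ) : mods4 a % 4 = a % 4 := by unfold mods4; omega

lemma mods4_congr {a b : ℤ} (h : a % 4 = b % 4) : mods4 a = mods4 b := by
  unfold mods4; omega

lemma mods4_eq_self {a : ℤ} (h1 : 1 ≤ a) (h2 : a ≤ 4) : mods4 a = a := by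
  unfold mods4; omega

lemma altSeq_eq (T : ℕ) : altSeq T = myAlt 0 T := by
  unfold altSeq myAlt
  refine List.map_congr_left (fun i _ => ?_)
  have : ((i % 4 : ℕ) : ℤ) = (i : ℤ) % 4 := by push_cast; ring
  rw [this]; unfold mods4; omega

lemma myAlt_congr {p q : ℤ} (h : p % 4 = q % 4) (L : ℕ) : myAlt p L = myAlt q L := by
  unfold myAlt
  refine List.map_congr_left (fun i _ => mods4_congr ?_)
  omega

lemma myAlt_add (p : ℤ) (L1 L2 : ℕ) :
    myAlt p (L1 + L2) = myAlt p L1 ++ myAlt (p + L1) L2 := by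
  unfold myAlt
  rw [List.range_add, List.map_append, List.map_map]
  congr 1
  refine List.map_congr_left (fun i _ => ?_)
  simp only [Function.comp_apply]
  refine mods4_congr ?_
  push_cast; ring_nf

lemma myAlt_one (p : ℤ) : myAlt p 1 = [mods4 (p + 1)] := by
  simp [myAlt, List.range_succ]

lemma dsum_nonneg (p : ℤ) (x : List ℤ) : 0 ≤ dsum p x := by
  induction x generalizing p with
  | nil => simp [dsum]
  | cons c r ih =>
    have := mods4_bounds (c - p)
    have := ih c
    simp only [dsum]; omega

lemma sublist_myAlt (x : List ℤ) (hx : IsQ x) (p : ℤ) :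
    x.Sublist (myAlt p (dsum p x).toNat) := by
  induction x generalizing p with
  | nil => simp
  | cons c r ih =>
    obtain ⟨hc1, hc4⟩ := hx c (List.mem_cons_self)
    have hxr : IsQ r := fun a ha => hx a (List.mem_cons_of_mem c ha)
    set d : ℤ := mods4 (c - p) with hd
    have hdb := mods4_bounds (c - p)
    have hrn := dsum_nonneg c r
    have hsum : dsum p (c :: r) = d + dsum c r := rfl
    have htn : (dsum p (c :: r)).toNat = d.toNat + (dsum c r).toNat := by
      rw [hsum]; omega
    rw [htn, myAlt_add]
    -- split off the first d.toNat symbols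
    obtain ⟨m, hm⟩ : ∃ m, d.toNat = m + 1 := ⟨d.toNat - 1, by omega⟩
    have hsplit : myAlt p d.toNat = myAlt p m ++ [c] := by
      rw [hm, myAlt_add, myAlt_one]
      congr 1
      have h1 : (p + (m : ℤ) + 1) % 4 = c % 4 := by
        have h2 : d % 4 = (c - p) % 4 := mods4_emod (c - p)
        have h3 : ((m : ℤ) + 1) = d := by omega
        omega
      rw [mods4_congr h1, mods4_eq_self hc1 hc4]
    have htail : myAlt (p + (d.toNat : ℤ)) (dsum c r).toNat
        = myAlt c (dsum c r).toNat := by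
      refine myAlt_congr ?_ _
      have h2 : d % 4 = (c - p) % 4 := mods4_emod (c - p)
      omega
    rw [hsplit, htail, List.append_assoc]
    have h5 : (c :: r).Sublist (c :: myAlt c (dsum c r).toNat) :=
      (ih hxr c).cons₂ c
    exact h5.trans (List.sublist_append_right _ _)

lemma synTime_le (x : List ℤ) (hx : IsQ x) : (synTime x : ℤ) ≤ dsum 0 x := by
  have h1 : synTime x ≤ (dsum 0 x).toNat := by
    apply Nat.sInf_le
    show x.Sublist (altSeq (dsum 0 x).toNat)
    rw [altSeq_eq]; exact sublist_myAlt x hx 0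
  have := dsum_nonneg 0 x
  omega

/-- the complementing involution. -/
def tw (p q : ℤ) : List ℤ → List ℤ
  | [] => []
  | c :: r => mods4 (q + 1 - c + p) :: tw c (mods4 (q + 1 - c + p)) r

lemma tw_length (p q : ℤ) (x : List ℤ) : (tw p q x).length = x.length := by
  induction x generalizing p q with
  | nil => rfl
  | cons c r ih => simp [tw, ih]

lemma tw_isQ (p q : ℤ) (x : List ℤ) : IsQ (tw p q x) := by
  induction x generalizing p q with
  | nil => intro a ha; simp [tw] at ha
  | cons c r ih =>
    intro a ha
    simp only [tw, List.mem_cons] at ha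
    rcases ha with h | h
    · subst h; exact mods4_bounds _
    · exact ih c _ a h

lemma tw_dsum (p q : ℤ) (x : List ℤ) :
    dsum q (tw p q x) + dsum p x = 5 * x.length := by
  induction x generalizing p q with
  | nil => simp [tw, dsum]
  | cons c r ih =>
    set c' : ℤ := mods4 (q + 1 - c + p) with hc'
    have hstep : mods4 (c' - q) + mods4 (c - p) = 5 := by
      have h1 : c' % 4 = (q + 1 - c + p) % 4 := mods4_emod _
      have h2 : mods4 (c' - q) = mods4 (1 - (c - p)) := mods4_congr (by omega)
      rw [h2]
      unfold mods4; omega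
    have h3 := ih c c'
    show mods4 (c' - q) + dsum c' (tw c c' r) + (mods4 (c - p) + dsum c r)
        = 5 * ((c :: r).length : ℤ)
    simp only [List.length_cons]
    push_cast
    omega

lemma tw_invol (p q : ℤ) (x : List ℤ) (hx : IsQ x) : tw q p (tw p q x) = x := by
  induction x generalizing p q with
  | nil => rfl
  | cons c r ih =>
    obtain ⟨hc1, hc4⟩ := hx c (List.mem_cons_self)
    have hxr : IsQ r := fun a ha => hx a (List.mem_cons_of_mem c ha)
    set c' : ℤ := mods4 (q + 1 - c + p) with hc'
    have h1 : c' % 4 = (q + 1 - c + p) % 4 := mods4_emod _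
    have h2 : mods4 (p + 1 - c' + q) = c := by
      rw [mods4_congr (show (p + 1 - c' + q) % 4 = c % 4 by omega)]
      exact mods4_eq_self hc1 hc4
    show mods4 (p + 1 - c' + q) :: tw c' (mods4 (p + 1 - c' + q)) (tw c c' r) = c :: r
    rw [h2, ih c c' hxr]

/-- the finset of quaternary words of length n. -/
noncomputable def Qfin : ℕ → Finset (List ℤ)
  | 0 => {[]}
  | n + 1 => Finset.image₂ List.cons (Finset.Icc (1 : ℤ) 4) (Qfin n)

lemma mem_Qfin {n : ℕ} {x : List ℤ} : x ∈ Qfin n ↔ x.length = n ∧ IsQ x := by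
  induction n generalizing x with
  | zero =>
    simp only [Qfin, Finset.mem_singleton]
    constructor
    · rintro rfl; exact ⟨rfl, fun a ha => by simp at ha⟩
    · rintro ⟨h, -⟩; exact List.eq_nil_of_length_eq_zero h
  | succ n ih =>
    simp only [Qfin, Finset.mem_image₂, Finset.mem_Icc]
    constructor
    · rintro ⟨a, ⟨ha1, ha4⟩, b, hb, rfl⟩
      obtain ⟨hbl, hbq⟩ := ih.mp hb
      refine ⟨by simp [hbl], fun c hc => ?_⟩
      rcases List.mem_cons.mp hc with h | h
      · subst h; exact ⟨ha1, ha4⟩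
      · exact hbq c h
    · rintro ⟨hl, hq⟩
      match x, hl with
      | c :: r, hl =>
        refine ⟨c, hq c (List.mem_cons_self), r,
          ih.mpr ⟨by simpa using hl, fun a ha => hq a (List.mem_cons_of_mem c ha)⟩, rfl⟩

lemma cons_injective2 : Function.Injective2 (List.cons (α := ℤ)) := by
  intro a₁ a₂ b₁ b₂ h
  simpa using h

lemma Qfin_card (n : ℕ) : (Qfin n).card = 4 ^ n := by
  induction n with
  | zero => rfl
  | succ n ih =>
    rw [Qfin, Finset.card_image₂ cons_injective2, ih]
    simp [Int.card_Icc]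
    ring

/-- if `2T ≥ 5n` then `A(n,T) ≥ 4^n / 2`: at least half of all
quaternary words of length `n` have synthesis time at most `T`. -/
theorem A_ge_half (n : ℕ) (hn : 0 < n) (T : ℤ) (hT : (5 * n : ℤ) ≤ 2 * T) :
    4 ^ n ≤ 2 * A n T := by
  classical
  set Sfin : Finset (List ℤ) := (Qfin n).filter (fun x => dsum 0 x ≤ T) with hSfin
  -- Sfin is contained in W n T
  have hSW : (↑Sfin : Set (List ℤ)) ⊆ W n T := by
    intro x hx
    simp only [hSfin, Finset.coe_filter, Set.mem_setOf_eq] at hx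
    obtain ⟨hxQ, hxT⟩ := hx
    obtain ⟨hlen, hQ⟩ := mem_Qfin.mp hxQ
    exact ⟨hlen, hQ, (synTime_le x hQ).trans hxT⟩
  -- W n T is finite
  have hWfin : (W n T).Finite := by
    apply (Qfin n).finite_toSet.subset
    intro x hx
    exact mem_Qfin.mpr ⟨hx.1, hx.2.1⟩
  have hcard : Sfin.card ≤ A n T := by
    have := Set.ncard_le_ncard hSW hWfin
    rwa [Set.ncard_coe_finset] at this
  -- complement injects into Sfin via tw 0 0
  set Cfin : Finset (List ℤ) := (Qfin n).filter (fun x => ¬ dsum 0 x ≤ T) with hCfin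
  have hinj : Cfin.card ≤ Sfin.card := by
    apply Finset.card_le_card_of_injOn (tw 0 0)
    · intro x hx
      simp only [hCfin, Finset.mem_coe, Finset.mem_filter] at hx
      obtain ⟨hxQ, hxT⟩ := hx
      obtain ⟨hlen, hQ⟩ := mem_Qfin.mp hxQ
      have hds := tw_dsum 0 0 x
      simp only [hSfin, Finset.mem_coe, Finset.mem_filter]
      refine ⟨mem_Qfin.mpr ⟨by rw [tw_length, hlen], tw_isQ 0 0 x⟩, ?_⟩
      have : dsum 0 (tw 0 0 x) = 5 * x.length - dsum 0 x := by omega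
      rw [this, hlen]
      omega
    · intro x hx y hy hxy
      simp only [hCfin, Finset.mem_coe, Finset.mem_filter] at hx hy
      have hQx := (mem_Qfin.mp hx.1).2
      have hQy := (mem_Qfin.mp hy.1).2
      calc x = tw 0 0 (tw 0 0 x) := (tw_invol 0 0 x hQx).symm
        _ = tw 0 0 (tw 0 0 y) := by rw [hxy]
        _ = y := tw_invol 0 0 y hQy
  have hsplit : Sfin.card + Cfin.card = (Qfin n).card :=
    Finset.card_filter_add_card_filter_not _
  rw [Qfin_card] at hsplit
  omega
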